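/- arXiv:1601.04249 — 4 statements merged into one kernel-verified Lean document; each statement's English description precedes it below -/
import Mathlib

section
/- For every integer base β ≥ 2 and every finite list of natural numbers X_1, …, X_K, the sum of the numbers equals the sum of their multi-number carry value transformation and their multi-number XOR: X_1 + X_2 + ⋯ + X_K = CVT_β(X_1, …, X_K) + XOR_β(X_1, …, X_K). -/
/-- The `i`-th base-`β` digit of `X`. -/
def digit (β X i : ℕ) : ℕ := X / β ^ i % β

/-- Column sum at digit position `i` of a list of naturals in base `β`. -/
def colSum (β : ℕ) (L : List ℕ) (i : ℕ) : ℕ := (L.map fun X => digit β X i).sum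

/-- Multi-number XOR in base `β`. -/
noncomputable def XORb (β : ℕ) (L : List ℕ) : ℕ := ∑ᶠ i : ℕ, (colSum β L i % β) * β ^ i

/-- Multi-number carry value transformation in base `β`. -/
noncomputable def CVTb (β : ℕ) (L : List ℕ) : ℕ := ∑ᶠ i : ℕ, (colSum β L i / β) * β ^ (i + 1)

lemma sum_digits_mod (β X N : ℕ) :
    ∑ i ∈ Finset.range N, digit β X i * β ^ i = X % β ^ N := by
  induction N with
  | zero => simp [Nat.mod_one]
  | succ n ih =>
    rw [Finset.sum_range_succ, ih, pow_succ, Nat.mod_mul, digit]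
    ring

lemma sum_digits (β X N : ℕ) (hX : X < β ^ N) :
    ∑ i ∈ Finset.range N, digit β X i * β ^ i = X := by
  rw [sum_digits_mod, Nat.mod_eq_of_lt hX]

lemma list_sum_eq (β N : ℕ) (L : List ℕ) (h : ∀ X ∈ L, X < β ^ N) :
    L.sum = ∑ i ∈ Finset.range N, colSum β L i * β ^ i := by
  induction L with
  | nil => simp [colSum]
  | cons x L ih =>
    have hx := h x (by simp)
    have hL : ∀ X ∈ L, X < β ^ N := fun X hX => h X (by simp [hX])
    simp only [List.sum_cons, ih hL, colSum, List.map_cons, List.sum_cons, add_mul,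
      Finset.sum_add_distrib]
    rw [sum_digits β x N hx]

theorem stmt_0 (β : ℕ) (hβ : 2 ≤ β) (L : List ℕ) :
    L.sum = CVTb β L + XORb β L := by
  obtain ⟨N, hN⟩ : ∃ N, N = L.sum := ⟨L.sum, rfl⟩
  have hb : ∀ X ∈ L, X < β ^ N := by
    intro X hX
    calc X ≤ L.sum := List.single_le_sum (fun _ _ => Nat.zero_le _) _ hX
    _ < 2 ^ N := hN ▸ Nat.lt_two_pow_self
    _ ≤ β ^ N := Nat.pow_le_pow_left hβ _
  have hcol : ∀ i, N ≤ i → colSum β L i = 0 := by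
    intro i hi
    simp only [colSum, List.sum_eq_zero_iff]
    intro d hd
    simp only [List.mem_map] at hd
    obtain ⟨X, hX, rfl⟩ := hd
    have : X / β ^ i = 0 :=
      Nat.div_eq_of_lt (lt_of_lt_of_le (hb X hX) (Nat.pow_le_pow_right (by omega) hi))
    simp [digit, this]
  have hx : XORb β L = ∑ i ∈ Finset.range N, (colSum β L i % β) * β ^ i := by
    apply finsum_eq_sum_of_support_subset
    intro i hi
    simp only [Function.mem_support] at hi
    simp only [Finset.coe_range, Set.mem_Iio]
    by_contra h
    rw [hcol i (by omega)] at hi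
    simp at hi
  have hc : CVTb β L = ∑ i ∈ Finset.range N, (colSum β L i / β) * β ^ (i + 1) := by
    apply finsum_eq_sum_of_support_subset
    intro i hi
    simp only [Function.mem_support] at hi
    simp only [Finset.coe_range, Set.mem_Iio]
    by_contra h
    rw [hcol i (by omega)] at hi
    simp at hi
  rw [hx, hc, ← Finset.sum_add_distrib, list_sum_eq β N L hb]
  apply Finset.sum_congr rfl
  intro i _
  conv_lhs => rw [← Nat.div_add_mod (colSum β L i) β]
  rw [pow_succ]
  ring
end

section
/- In the binary system (β = 2), if K is an even natural number and X is any natural number, then the multi-number carry value transformation of K copies of X equals the sum of the K numbers: CVT_2(X, X, …, X) [K copies] = K·X. -/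
lemma sum_digit (β X n : ℕ) :
    ∑ i ∈ Finset.range n, digit β X i * β ^ i = X % β ^ n := by
  induction n with
  | zero => simp [Nat.mod_one]
  | succ n ih =>
    rw [Finset.sum_range_succ, ih, pow_succ, Nat.mod_mul, digit]
    ring

lemma digit_eq_zero (X i : ℕ) (h : X < 2 ^ i) : digit 2 X i = 0 := by
  simp [digit, Nat.div_eq_of_lt h]

lemma colSum_replicate (K X i : ℕ) :
    colSum 2 (List.replicate K X) i = K * digit 2 X i := by
  simp [colSum, List.map_replicate, List.sum_replicate, smul_eq_mul]

theorem stmt_5 (K X : ℕ) (hK : Even K) :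
    CVTb 2 (List.replicate K X) = K * X := by
  obtain ⟨m, hm⟩ := hK
  have hterm : ∀ i, colSum 2 (List.replicate K X) i / 2 * 2 ^ (i + 1)
      = K * (digit 2 X i * 2 ^ i) := by
    intro i
    rw [colSum_replicate, hm]
    have h2 : (m + m) * digit 2 X i = 2 * (m * digit 2 X i) := by ring
    rw [h2, Nat.mul_div_cancel_left _ (by norm_num), pow_succ]
    ring
  have hsupp : (Function.support fun i => K * (digit 2 X i * 2 ^ i))
      ⊆ ↑(Finset.range (X + 1)) := by
    intro i hi
    simp only [Function.mem_support, ne_eq] at hi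
    simp only [Finset.coe_range, Set.mem_Iio]
    by_contra h
    push_neg at h
    have : X < 2 ^ i := lt_of_lt_of_le (by omega) (Nat.lt_two_pow_self (n := i)).le
    rw [digit_eq_zero X i this] at hi
    simp at hi
  calc CVTb 2 (List.replicate K X)
      = ∑ᶠ i, K * (digit 2 X i * 2 ^ i) := by
        unfold CVTb; exact finsum_congr hterm
    _ = ∑ i ∈ Finset.range (X + 1), K * (digit 2 X i * 2 ^ i) :=
        finsum_eq_finset_sum_of_support_subset _ hsupp
    _ = K * ∑ i ∈ Finset.range (X + 1), digit 2 X i * 2 ^ i := by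
        rw [Finset.mul_sum]
    _ = K * X := by
        rw [sum_digit]
        congr 1
        exact Nat.mod_eq_of_lt (lt_of_lt_of_le (Nat.lt_two_pow_self (n := X))
          (Nat.pow_le_pow_right (by norm_num) (by omega)))
end

section
/- For every integer base β ≥ 2, natural numbers X_1, …, X_n, and every scalar K that is a power of β (K = β^m for some m ≥ 0), if CVT_β(X_1, …, X_n) = P then CVT_β(K·X_1, K·X_2, …, K·X_n) = K·P. -/
lemma digit_lt (β X m j : ℕ) (hβ : 2 ≤ β) (hj : j < m) : digit β (β ^ m * X) j = 0 := by
  have hb : 0 < β ^ j := Nat.pow_pos (n := j) (by omega)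
  unfold digit
  have h1 : β ^ m * X = β ^ j * (β ^ (m - j) * X) := by
    rw [← mul_assoc, ← pow_add]; congr 2; omega
  rw [h1, Nat.mul_div_cancel_left _ hb]
  obtain ⟨c, hc⟩ : β ∣ β ^ (m - j) * X :=
    Dvd.dvd.mul_right (dvd_pow_self β (by omega)) X
  rw [hc, Nat.mul_mod_right]

lemma digit_ge (β X m i : ℕ) (hβ : 2 ≤ β) : digit β (β ^ m * X) (m + i) = digit β X i := by
  unfold digit
  rw [pow_add, Nat.mul_div_mul_left _ _ (Nat.pow_pos (n := m) (by omega))]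

lemma colSum_map (β K m j : ℕ) (L : List ℕ) (hK : K = β ^ m) :
    colSum β (L.map fun X => K * X) j = (L.map fun X => digit β (β ^ m * X) j).sum := by
  subst hK
  simp [colSum, List.map_map, Function.comp_def]

lemma colSum_zero_of_ge (β N j : ℕ) (hβ : 2 ≤ β) (L : List ℕ)
    (hL : ∀ X ∈ L, X < β ^ N) (hj : N ≤ j) : colSum β L j = 0 := by
  unfold colSum
  rw [List.sum_eq_zero]
  intro x hx
  simp only [List.mem_map] at hx
  obtain ⟨X, hX, rfl⟩ := hx
  have : X < β ^ j := lt_of_lt_of_le (hL X hX) (Nat.pow_le_pow_right (by omega) hj)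
  simp [digit, Nat.div_eq_of_lt this]

theorem stmt_7 (β : ℕ) (hβ : 2 ≤ β) (L : List ℕ) (K m P : ℕ) (hK : K = β ^ m)
    (hP : CVTb β L = P) :
    CVTb β (L.map fun X => K * X) = K * P := by
  subst hP
  set N := L.sum + 1 with hN
  have hLb : ∀ X ∈ L, X < β ^ N := by
    intro X hX
    have h1 : X ≤ L.sum := List.le_sum_of_mem hX
    have h2 : N < β ^ N := Nat.lt_pow_self (n := N) (by omega)
    omega
  have hcs : ∀ j, N ≤ j → colSum β L j = 0 := fun j hj => colSum_zero_of_ge β N j hβ L hLb hj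
  have hcs' : ∀ j, colSum β (L.map fun X => K * X) j =
      if m ≤ j then colSum β L (j - m) else 0 := by
    intro j
    rw [colSum_map β K m j L hK]
    split_ifs with h
    · unfold colSum
      congr 1
      apply List.map_congr_left
      intro X _
      have h := digit_ge β X m (j - m) hβ
      rwa [show m + (j - m) = j by omega] at h
    · rw [List.sum_eq_zero]
      intro x hx
      simp only [List.mem_map] at hx
      obtain ⟨X, _, rfl⟩ := hx
      exact digit_lt β X m j hβ (by omega)
  -- convert finsums to finite sums
  have e1 : CVTb β L = ∑ i ∈ Finset.range N, (colSum β L i / β) * β ^ (i + 1) := by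
    unfold CVTb
    apply finsum_eq_finset_sum_of_support_subset
    intro i hi
    simp only [Function.mem_support] at hi
    simp only [Finset.coe_range, Set.mem_Iio]
    by_contra h
    exact hi (by rw [hcs i (by omega)]; simp)
  have e2 : CVTb β (L.map fun X => K * X) =
      ∑ i ∈ Finset.range (m + N), (colSum β (L.map fun X => K * X) i / β) * β ^ (i + 1) := by
    unfold CVTb
    apply finsum_eq_finset_sum_of_support_subset
    intro i hi
    simp only [Function.mem_support] at hi
    simp only [Finset.coe_range, Set.mem_Iio]
    by_contra h
    apply hi
    rw [hcs' i, if_pos (by omega), hcs (i - m) (by omega)]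
    simp
  rw [e1, e2]
  rw [Finset.range_eq_Ico, ← Finset.sum_Ico_consecutive _ (Nat.zero_le m) (by omega : m ≤ m + N)]
  have h0 : ∑ i ∈ Finset.Ico 0 m, (colSum β (L.map fun X => K * X) i / β) * β ^ (i + 1) = 0 := by
    apply Finset.sum_eq_zero
    intro i hi
    simp only [Finset.mem_Ico] at hi
    rw [hcs' i, if_neg (by omega)]
    simp
  rw [h0, zero_add]
  rw [Finset.sum_Ico_eq_sum_range]
  rw [Finset.mul_sum, show m + N - m = N by omega]
  apply Finset.sum_congr rfl
  intro i hi
  rw [hcs' (m + i), if_pos (by omega)]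
  have : m + i - m = i := by omega
  rw [this, hK]
  rw [pow_add]
  ring
end

section
/- In the binary system (β = 2), let X be a natural number, m a number of copies, and K ≥ 1. If the multi-number carry value transformation of m copies of X equals P, i.e. CVT_2(X, X, …, X) [m copies] = P, then the multi-number carry value transformation of m copies of X^K satisfies CVT_2(X^K, X^K, …, X^K) [m copies] = P·X^{K−1}. -/
lemma digit_sum (β Y n : ℕ) : ∑ i ∈ Finset.range n, digit β Y i * β ^ i = Y % β ^ n := by
  induction n with
  | zero => simp [Nat.mod_one]
  | succ n ih =>
    rw [Finset.sum_range_succ, ih, Nat.mod_pow_succ, digit]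
    ring

lemma cvt_rep (m Y : ℕ) : CVTb 2 (List.replicate m Y) = 2 * (m / 2) * Y := by
  have hY : Y < 2 ^ (Y + 1) :=
    lt_of_lt_of_le (Nat.lt_two_pow_self (n := Y)) (Nat.pow_le_pow_right (by norm_num) (by omega))
  have hcol : ∀ i, colSum 2 (List.replicate m Y) i = m * digit 2 Y i := by
    intro i
    simp [colSum, List.map_replicate, List.sum_replicate, smul_eq_mul]
  have hsub : (Function.support fun i => colSum 2 (List.replicate m Y) i / 2 * 2 ^ (i + 1))
      ⊆ ↑(Finset.range (Y + 1)) := by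
    intro i hi
    simp only [Function.mem_support] at hi
    by_contra h
    simp only [Finset.coe_range, Set.mem_Iio, not_lt] at h
    have : Y / 2 ^ i = 0 := Nat.div_eq_of_lt (lt_of_lt_of_le hY (Nat.pow_le_pow_right (by norm_num) (by omega)))
    simp [hcol, digit, this] at hi
  rw [CVTb, finsum_eq_finset_sum_of_support_subset _ hsub]
  have : ∀ i ∈ Finset.range (Y + 1),
      colSum 2 (List.replicate m Y) i / 2 * 2 ^ (i + 1) = 2 * (m / 2) * (digit 2 Y i * 2 ^ i) := by
    intro i _
    rw [hcol]
    have hd : digit 2 Y i < 2 := Nat.mod_lt _ (by norm_num)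
    interval_cases h : digit 2 Y i
    · simp
    · rw [pow_succ]; ring_nf
  rw [Finset.sum_congr rfl this, ← Finset.mul_sum, digit_sum,
    Nat.mod_eq_of_lt hY]

theorem stmt_9 (X m K P : ℕ) (hK : 1 ≤ K)
    (hP : CVTb 2 (List.replicate m X) = P) :
    CVTb 2 (List.replicate m (X ^ K)) = P * X ^ (K - 1) := by
  rw [cvt_rep] at hP ⊢
  have hx : X * X ^ (K - 1) = X ^ K := by
    rw [← pow_succ']; congr 1; omega
  rw [← hP, ← hx]; ring
end
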